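/- If G is the Heisenberg group over Z/n, generated by a, b, c with relations a^n = b^n = c^n = 1, [a,c] = [b,c] = 1, and [a,b] = c, then every abelian subgroup A of G satisfies [G : A] ≥ n. -/

import Mathlib

/-- An "isotropic" additive subgroup of `(ZMod n)²` has at most `n` elements. -/
theorem isotropic_card_le (n : ℕ) [NeZero n] (H : AddSubgroup (ZMod n × ZMod n))
    (hiso : ∀ p ∈ H, ∀ q ∈ H, p.1 * q.2 = q.1 * p.2) :
    Nat.card H ≤ n := by
  classical
  -- the image of the first projection
  set H1 : AddSubgroup (ZMod n) := H.map (AddMonoidHom.fst _ _) with hH1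
  obtain ⟨⟨a, haH1⟩, hgen⟩ := IsAddCyclic.exists_generator (α := H1)
  obtain ⟨g, hgH, hg1⟩ := haH1
  -- multiplication by `a` as an `AddMonoidHom`
  set μ : ZMod n →+ ZMod n := AddMonoidHom.mulLeft a with hμ
  have hrange : μ.range = AddSubgroup.zmultiples a := by
    ext x
    constructor
    · rintro ⟨y, rfl⟩
      refine ⟨(y.val : ℤ), ?_⟩
      push_cast
      simp [μ, ZMod.natCast_val, ZMod.cast_id, mul_comm]
    · rintro ⟨k, rfl⟩
      exact ⟨(k : ZMod n), by push_cast [μ]; simp [mul_comm]⟩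
  -- `H1 = μ.range`
  have hH1eq : H1 = μ.range := by
    rw [hrange]
    apply le_antisymm
    · intro x hx
      obtain ⟨k, hk⟩ := hgen ⟨x, hx⟩
      exact ⟨k, congrArg Subtype.val hk⟩
    · rintro x ⟨k, rfl⟩
      exact AddSubgroup.zsmul_mem _ (AddSubgroup.mem_map.mpr ⟨g, hgH, hg1⟩) k
  -- a section choosing, for each value of the first coordinate, a second coordinate
  have hsec : ∀ v : ZMod n, ∃ s : ZMod n, (∃ t, (v, t) ∈ H) → (v, s) ∈ H := by
    intro v
    by_cases h : ∃ t, (v, t) ∈ H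
    · exact ⟨h.choose, fun _ => h.choose_spec⟩
    · exact ⟨0, fun h' => absurd h' h⟩
  choose τ hτ using hsec
  have hτH : ∀ p ∈ H, (p.1, τ p.1) ∈ H := fun p hp => hτ p.1 ⟨p.2, by
    rwa [show ((p.1, p.2) : ZMod n × ZMod n) = p from rfl]⟩
  have hkey : ∀ p ∈ H, a * (p.2 - τ p.1) = 0 := by
    intro p hp
    have h1 := hiso p hp g hgH
    have h2 := hiso (p.1, τ p.1) (hτH p hp) g hgH
    have hg1' : g.1 = a := hg1
    rw [hg1'] at h1 h2
    simp only at h1 h2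
    linear_combination h2 - h1
  -- the injection `H ↪ H1 × ker μ`
  have hinj : Nat.card H ≤ Nat.card (H1 × μ.ker) := by
    refine Nat.card_le_card_of_injective
      (fun p => (⟨p.val.1, ⟨p.val, p.2, rfl⟩⟩,
        ⟨p.val.2 - τ p.val.1, by simpa [μ, AddMonoidHom.mem_ker] using hkey p.val p.2⟩)) ?_
    intro p q hpq
    have h1 : p.val.1 = q.val.1 := congrArg (fun x => ((x.1 : H1) : ZMod n)) hpq
    have h2 : p.val.2 - τ p.val.1 = q.val.2 - τ q.val.1 :=
      congrArg (fun x => ((x.2 : μ.ker) : ZMod n)) hpq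
    rw [h1] at h2
    have h3 : p.val.2 = q.val.2 := sub_left_inj.mp h2
    exact Subtype.ext (Prod.ext h1 h3)
  have hcard : Nat.card H1 * Nat.card μ.ker = n := by
    have h1 : Nat.card (ZMod n) = Nat.card (ZMod n ⧸ μ.ker) * Nat.card μ.ker :=
      AddSubgroup.card_eq_card_quotient_mul_card_addSubgroup μ.ker
    have h2 : Nat.card (ZMod n ⧸ μ.ker) = Nat.card μ.range :=
      Nat.card_congr (QuotientAddGroup.quotientKerEquivRange μ).toEquiv
    rw [hH1eq, ← h2, ← h1, Nat.card_zmod]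
  calc Nat.card H ≤ Nat.card (H1 × μ.ker) := hinj
    _ = Nat.card H1 * Nat.card μ.ker := Nat.card_prod _ _
    _ = n := hcard


/-- The mod-`n` Heisenberg group, as triples `(a, b, c)` of elements of `ZMod n`,
where `(a,b,c)` corresponds to the unipotent upper triangular matrix
`![![1, a, c], ![0, 1, b], ![0, 0, 1]]`. -/
def Heisenberg (n : ℕ) : Type := ZMod n × ZMod n × ZMod n

namespace Heisenberg

variable {n : ℕ}

instance : Mul (Heisenberg n) :=
  ⟨fun x y => (x.1 + y.1, x.2.1 + y.2.1, x.2.2 + y.2.2 + x.1 * y.2.1)⟩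

instance : One (Heisenberg n) := ⟨((0 : ZMod n), (0 : ZMod n), (0 : ZMod n))⟩

instance : Inv (Heisenberg n) := ⟨fun x => (-x.1, -x.2.1, -x.2.2 + x.1 * x.2.1)⟩

lemma mul_def (x y : Heisenberg n) :
    x * y = (x.1 + y.1, x.2.1 + y.2.1, x.2.2 + y.2.2 + x.1 * y.2.1) := rfl

lemma one_def : (1 : Heisenberg n) = ((0 : ZMod n), (0 : ZMod n), (0 : ZMod n)) := rfl

lemma inv_def (x : Heisenberg n) :
    x⁻¹ = (-x.1, -x.2.1, -x.2.2 + x.1 * x.2.1) := rfl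

instance : Group (Heisenberg n) where
  mul_assoc a b c := by
    repeat rw [mul_def]
    try rw [one_def]
    try rw [inv_def]
    refine Prod.ext ?_ (Prod.ext ?_ ?_) <;> (try dsimp) <;> ring
  one_mul a := by
    repeat rw [mul_def]
    try rw [one_def]
    try rw [inv_def]
    refine Prod.ext ?_ (Prod.ext ?_ ?_) <;> (try dsimp) <;> ring
  mul_one a := by
    repeat rw [mul_def]
    try rw [one_def]
    try rw [inv_def]
    refine Prod.ext ?_ (Prod.ext ?_ ?_) <;> (try dsimp) <;> ring
  inv_mul_cancel a := by
    repeat rw [mul_def]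
    try rw [one_def]
    try rw [inv_def]
    refine Prod.ext ?_ (Prod.ext ?_ ?_) <;> (try dsimp) <;> ring

end Heisenberg

/-- Every abelian subgroup of the mod-`n` Heisenberg group has index at least `n`. -/
theorem heisenberg_abelian_subgroup_index (n : ℕ) (hn : 1 ≤ n)
    (A : Subgroup (Heisenberg n)) (hA : ∀ x ∈ A, ∀ y ∈ A, x * y = y * x) :
    n ≤ A.index := by

  haveI : NeZero n := ⟨by omega⟩
  haveI : Finite (Heisenberg n) := inferInstanceAs (Finite (ZMod n × ZMod n × ZMod n))
  -- the image of `A` in `(ZMod n)²` under forgetting the central coordinate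
  set H : AddSubgroup (ZMod n × ZMod n) :=
    { carrier := {p | ∃ z : ZMod n, ((p.1, p.2, z) : Heisenberg n) ∈ A}
      zero_mem' := ⟨0, A.one_mem⟩
      add_mem' := by
        rintro p q ⟨z, hz⟩ ⟨w, hw⟩
        exact ⟨z + w + p.1 * q.2, A.mul_mem hz hw⟩
      neg_mem' := by
        rintro p ⟨z, hz⟩
        exact ⟨-z + p.1 * p.2, A.inv_mem hz⟩ } with hHdef
  have hiso : ∀ p ∈ H, ∀ q ∈ H, p.1 * q.2 = q.1 * p.2 := by
    rintro p ⟨z, hz⟩ q ⟨w, hw⟩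
    have := congrArg (fun t : Heisenberg n => t.2.2) (hA _ hz _ hw)
    change z + w + p.1 * q.2 = w + z + q.1 * p.2 at this
    linear_combination this
  have hH : Nat.card H ≤ n := isotropic_card_le n H hiso
  -- the injection `A ↪ H × ZMod n`
  have hAcard : Nat.card A ≤ Nat.card H * n := by
    have hinj : Nat.card A ≤ Nat.card (H × ZMod n) := by
      refine Nat.card_le_card_of_injective
        (fun x => ((⟨(x.val.1, x.val.2.1), ⟨x.val.2.2, x.2⟩⟩ : H), x.val.2.2)) ?_
      intro x y hxy
      have h1 : x.val.1 = y.val.1 :=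
        congrArg (fun t => ((t.1 : H) : ZMod n × ZMod n).1) hxy
      have h2 : x.val.2.1 = y.val.2.1 :=
        congrArg (fun t => ((t.1 : H) : ZMod n × ZMod n).2) hxy
      have h3 : x.val.2.2 = y.val.2.2 := congrArg (fun t => (t.2 : ZMod n)) hxy
      exact Subtype.ext (Prod.ext h1 (Prod.ext h2 h3))
    calc Nat.card A ≤ Nat.card (H × ZMod n) := hinj
      _ = Nat.card H * n := by rw [Nat.card_prod, Nat.card_zmod]
  have hG : Nat.card (Heisenberg n) = n ^ 3 := by
    have : Nat.card (ZMod n × ZMod n × ZMod n) = n ^ 3 := by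
      rw [Nat.card_prod, Nat.card_prod, Nat.card_zmod]; ring
    exact this
  have hprod : Nat.card A * A.index = n ^ 3 := by
    rw [Subgroup.card_mul_index, hG]
  have hApos : 0 < Nat.card A := Nat.card_pos
  have h1 : Nat.card A ≤ n * n := le_trans hAcard (Nat.mul_le_mul_right n hH)
  have h2 : n * Nat.card A ≤ A.index * Nat.card A := by
    calc n * Nat.card A ≤ n * (n * n) := Nat.mul_le_mul_left n h1
      _ = n ^ 3 := by ring
      _ = Nat.card A * A.index := hprod.symm
      _ = A.index * Nat.card A := Nat.mul_comm _ _
  exact Nat.le_of_mul_le_mul_right h2 hApos
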